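/- Let D be an n × n matrix realized by a Δ-periodic temporal graph whose underlying graph is a tree T. Then for every pair of vertices u, v, the unique static path from u to v in T is the underlying path of the fastest temporal path from u to v, and consequently D_{u,v} equals the duration of the temporal path along this unique path. Moreover, the travel delays at all internal vertices of this path are uniquely determined by D via τ_{v_i}^{v_{i−1} v_{i+1}} = D_{u, v_{i+1}} − D_{u, v_i}. -/

import Mathlib

open SimpleGraph

/-- The residue of `a - b` modulo `Δ`, taken in `{1, …, Δ}` (value `Δ` when `a ≡ b`). -/
def resDelta (Δ : ℕ) (a b : ℤ) : ℤ :=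
  if (a - b) % (Δ : ℤ) = 0 then (Δ : ℤ) else (a - b) % (Δ : ℤ)

/-- In the Δ-periodic temporal graph `(G, lab, Δ)`, edge `e` is active at time `t`. -/
def Active {V : Type*} (G : SimpleGraph V) (Δ : ℕ) (lab : Sym2 V → ℤ)
    (e : Sym2 V) (t : ℤ) : Prop :=
  e ∈ G.edgeSet ∧ 1 ≤ t ∧ t ≡ lab e [ZMOD (Δ : ℤ)]

/-- The labeling assigns every edge a label in `{1, …, Δ}`. -/
def ValidLab {V : Type*} (G : SimpleGraph V) (Δ : ℕ) (lab : Sym2 V → ℤ) : Prop :=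
  ∀ e ∈ G.edgeSet, lab e ∈ Finset.Icc (1 : ℤ) (Δ : ℤ)

/-- `times` is a valid schedule of strictly increasing activation times for the walk `W`. -/
def IsTemporalWalk {V : Type*} (G : SimpleGraph V) (Δ : ℕ) (lab : Sym2 V → ℤ)
    {u v : V} (W : G.Walk u v) (times : List ℤ) : Prop :=
  List.Forall₂ (fun e t => Active G Δ lab e t) W.edges times ∧ times.Chain' (· < ·)

/-- Duration of a temporal path with the given traversal times. -/
def duration (times : List ℤ) : ℤ := times.getLast! - times.head! + 1

/-- There is a temporal path from `u` to `v` of duration `d`. -/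
def HasDur {V : Type*} (G : SimpleGraph V) (Δ : ℕ) (lab : Sym2 V → ℤ)
    (u v : V) (d : ℤ) : Prop :=
  ∃ (W : G.Walk u v) (times : List ℤ), W.IsPath ∧ times ≠ [] ∧
    IsTemporalWalk G Δ lab W times ∧ duration times = d

/-- `d` is the duration of a fastest temporal path from `u` to `v`. -/
def IsFastest {V : Type*} (G : SimpleGraph V) (Δ : ℕ) (lab : Sym2 V → ℤ)
    (u v : V) (d : ℤ) : Prop :=
  HasDur G Δ lab u v d ∧ ∀ d', HasDur G Δ lab u v d' → d ≤ d'

section ResDelta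

variable {Δ : ℕ} {a b s x : ℤ}

lemma resDelta_pos (hΔ : 1 ≤ Δ) (a b : ℤ) : 1 ≤ resDelta Δ a b := by
  unfold resDelta
  have hΔ' : (0:ℤ) < (Δ:ℤ) := by exact_mod_cast hΔ
  split
  · exact_mod_cast hΔ
  · rename_i h
    have := Int.emod_nonneg (a - b) (by omega : (Δ:ℤ) ≠ 0)
    omega

lemma resDelta_le (hΔ : 1 ≤ Δ) (a b : ℤ) : resDelta Δ a b ≤ (Δ:ℤ) := by
  unfold resDelta
  have hΔ' : (0:ℤ) < (Δ:ℤ) := by exact_mod_cast hΔ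
  split
  · exact le_refl _
  · exact le_of_lt (Int.emod_lt_of_pos _ hΔ')

lemma resDelta_modeq (hΔ : 1 ≤ Δ) (a b : ℤ) : resDelta Δ a b ≡ a - b [ZMOD (Δ:ℤ)] := by
  unfold resDelta
  split
  · rename_i h
    show (Δ:ℤ) % (Δ:ℤ) = (a - b) % (Δ:ℤ)
    rw [Int.emod_self, h]
  · show (a - b) % (Δ:ℤ) % (Δ:ℤ) = (a - b) % (Δ:ℤ)
    exact Int.emod_emod_of_dvd _ dvd_rfl

lemma resDelta_min (hΔ : 1 ≤ Δ) (hx : 1 ≤ x) (hc : x ≡ a - b [ZMOD (Δ:ℤ)]) :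
    resDelta Δ a b ≤ x := by
  have hΔ' : (0:ℤ) < (Δ:ℤ) := by exact_mod_cast hΔ
  have hxe : x % (Δ:ℤ) = (a - b) % (Δ:ℤ) := hc
  unfold resDelta
  split
  · rename_i h
    rw [h] at hxe
    exact Int.le_of_dvd (by omega) (Int.dvd_of_emod_eq_zero hxe)
  · rename_i h
    by_contra hlt
    push_neg at hlt
    have h1 : (a-b) % (Δ:ℤ) < (Δ:ℤ) := Int.emod_lt_of_pos _ hΔ'
    have h2 : x % (Δ:ℤ) = x := Int.emod_eq_of_lt (by omega) (by omega)
    omega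

lemma resDelta_congr_right (hΔ : 1 ≤ Δ) (h : s ≡ b [ZMOD (Δ:ℤ)]) (a : ℤ) :
    resDelta Δ a s = resDelta Δ a b := by
  have h2 : (a - s) % (Δ:ℤ) = (a - b) % (Δ:ℤ) := Int.ModEq.sub (Int.ModEq.refl a) h
  unfold resDelta
  rw [h2]

end ResDelta

/-- Sum of minimal travel delays along a list of labels, starting after label `b`. -/
lemma getLast!_cons_cons (x y : ℤ) (l : List ℤ) :
    (x :: y :: l).getLast! = (y :: l).getLast! := by
  simp [List.getLast!, List.getLast]

def mg (Δ : ℕ) : ℤ → List ℤ → ℤ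
  | _, [] => 0
  | b, a :: l => resDelta Δ a b + mg Δ a l

/-- Minimal duration along a list of labels. -/
def mdur (Δ : ℕ) : List ℤ → ℤ
  | [] => 0
  | a :: l => 1 + mg Δ a l

/-- Greedy (earliest) schedule starting after time `t`. -/
def gtimes (Δ : ℕ) : ℤ → List ℤ → List ℤ
  | _, [] => []
  | t, a :: l => (t + resDelta Δ a t) :: gtimes Δ (t + resDelta Δ a t) l

lemma gtimes_chain {Δ : ℕ} (hΔ : 1 ≤ Δ) : ∀ (l : List ℤ) (t : ℤ),
    List.Chain (· < ·) t (gtimes Δ t l)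
  | [], t => List.Chain.nil
  | a :: l, t => by
      rw [gtimes]
      exact List.Chain.cons (by have := resDelta_pos (a := a) (b := t) hΔ; omega)
        (gtimes_chain hΔ l _)

lemma gtimes_chain' {Δ : ℕ} (hΔ : 1 ≤ Δ) (l : List ℤ) (t : ℤ) :
    List.Chain' (· < ·) (gtimes Δ t l) := by
  cases l with
  | nil => exact List.IsChain.nil
  | cons a l =>
      rw [gtimes]
      exact gtimes_chain hΔ l _

lemma gtimes_forall₂ {Δ : ℕ} (hΔ : 1 ≤ Δ) : ∀ (l : List ℤ) (t : ℤ),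
    List.Forall₂ (fun a s => t < s ∧ s ≡ a [ZMOD (Δ:ℤ)]) l (gtimes Δ t l)
  | [], t => List.Forall₂.nil
  | a :: l, t => by
      rw [gtimes]
      refine List.Forall₂.cons ⟨?_, ?_⟩ ((gtimes_forall₂ hΔ l _).imp ?_)
      · have := resDelta_pos (a := a) (b := t) hΔ; omega
      · have h := (resDelta_modeq hΔ a t).add_left t
        simpa using h
      · rintro a' s' ⟨h1, h2⟩
        exact ⟨by have := resDelta_pos (a := a) (b := t) hΔ; omega, h2⟩

lemma gtimes_getLast! {Δ : ℕ} (hΔ : 1 ≤ Δ) : ∀ (l : List ℤ) (a b t : ℤ),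
    t ≡ b [ZMOD (Δ:ℤ)] → (gtimes Δ t (a :: l)).getLast! = t + mg Δ b (a :: l)
  | [], a, b, t, h => by
      rw [gtimes, gtimes]
      simp only [List.getLast!, List.getLast, mg]
      rw [resDelta_congr_right hΔ h a]
      ring
  | a' :: l', a, b, t, h => by
      rw [gtimes]
      have hmod : t + resDelta Δ a t ≡ a [ZMOD (Δ:ℤ)] := by
        have h2 := (resDelta_modeq hΔ a t).add_left t
        simpa using h2
      have ih := gtimes_getLast! hΔ l' a' a (t + resDelta Δ a t) hmod
      rw [show gtimes Δ (t + resDelta Δ a t) (a' :: l') =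
            (t + resDelta Δ a t + resDelta Δ a' (t + resDelta Δ a t)) ::
              gtimes Δ (t + resDelta Δ a t + resDelta Δ a' (t + resDelta Δ a t)) l' from by
          rw [gtimes]] at ih ⊢
      rw [getLast!_cons_cons, ih, resDelta_congr_right hΔ h a]
      rw [mg, mg, mg]
      ring

lemma gtimes_duration {Δ : ℕ} (hΔ : 1 ≤ Δ) (a : ℤ) (l : List ℤ) :
    duration (gtimes Δ 0 (a :: l)) = mdur Δ (a :: l) := by
  unfold duration
  rw [gtimes_getLast! hΔ l a 0 0 (Int.ModEq.refl 0)]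
  rw [show gtimes Δ 0 (a :: l) = (0 + resDelta Δ a 0) :: gtimes Δ (0 + resDelta Δ a 0) l from by
    rw [gtimes]]
  simp only [List.head!]
  rw [mg, mdur]
  ring

lemma lower_bound {Δ : ℕ} (hΔ : 1 ≤ Δ) : ∀ (l ts : List ℤ) (a s : ℤ),
    List.Forall₂ (fun a' s' => s' ≡ a' [ZMOD (Δ:ℤ)]) l ts →
    List.Chain (· < ·) s ts → s ≡ a [ZMOD (Δ:ℤ)] →
    s + mg Δ a l ≤ (s :: ts).getLast! := by
  intro l
  induction l with
  | nil =>
      intro ts a s hf _ _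
      rw [List.forall₂_nil_left_iff.mp hf]
      simp [mg, List.getLast!, List.getLast]
  | cons a' l' ih =>
      intro ts a s hf hch hcong
      obtain ⟨s', ts', hcs, hf', rfl⟩ := List.forall₂_cons_left_iff.mp hf
      replace hch := List.isChain_cons_cons.mp hch
      obtain ⟨hss', hch'⟩ := hch
      have hkey : resDelta Δ a' a ≤ s' - s :=
        resDelta_min hΔ (by omega) ((hcs).sub hcong)
      have ihh := ih ts' a' s' hf' hch' hcs
      rw [getLast!_cons_cons]
      rw [mg]
      linarith

lemma forall₂_and_of_mem {α β : Type*} {p : α → Prop} {r : α → β → Prop} :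
    ∀ {l : List α} {l' : List β}, List.Forall₂ r l l' → (∀ a ∈ l, p a) →
      List.Forall₂ (fun a b => p a ∧ r a b) l l'
  | _, _, List.Forall₂.nil, _ => List.Forall₂.nil
  | _, _, List.Forall₂.cons h t, hp =>
      List.Forall₂.cons ⟨hp _ List.mem_cons_self, h⟩
        (forall₂_and_of_mem t fun a ha => hp a (List.mem_cons_of_mem _ ha))





lemma greedy_valid {V : Type*} (G : SimpleGraph V) (Δ : ℕ) (hΔ : 1 ≤ Δ)
    (lab : Sym2 V → ℤ) {x y : V} (W : G.Walk x y) :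
    IsTemporalWalk G Δ lab W (gtimes Δ 0 (W.edges.map lab)) := by
  constructor
  · have h1 := gtimes_forall₂ hΔ (W.edges.map lab) 0
    rw [List.forall₂_map_left_iff] at h1
    have h2 := forall₂_and_of_mem h1 (fun e he => W.edges_subset_edgeSet he)
    exact h2.imp fun e t ⟨hm, hlt, hc⟩ => ⟨hm, by omega, hc⟩
  · exact gtimes_chain' hΔ _ _

section Walks
variable {V : Type*} {G : SimpleGraph V}

def wtake : ∀ {u v : V} (W : G.Walk u v) (n : ℕ), G.Walk u (W.getVert n)
  | _, _, .nil, _ => .nil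
  | _, _, .cons h _, 0 => .nil
  | _, _, .cons h q, n + 1 => .cons h (wtake q n)

lemma edges_wtake : ∀ {u v : V} (W : G.Walk u v) (n : ℕ),
    (wtake W n).edges = W.edges.take n
  | _, _, .nil, n => by simp [wtake]
  | _, _, .cons h q, 0 => rfl
  | _, _, .cons h q, n + 1 => by
      simp [wtake, Walk.edges_cons, edges_wtake q n]

lemma support_wtake_subset : ∀ {u v : V} (W : G.Walk u v) (n : ℕ) (x : V),
    x ∈ (wtake W n).support → x ∈ W.support
  | _, _, .nil, n, x => by simp [wtake]
  | _, _, .cons h q, 0, x => by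
      intro hx
      have hx' : x = _ := List.mem_singleton.mp hx
      subst hx'
      exact Walk.start_mem_support _
  | _, _, .cons h q, n + 1, x => by
      rw [Walk.support_cons, List.mem_cons]
      intro hx0
      rcases List.mem_cons.mp (show x ∈ _ :: (wtake q n).support from hx0) with rfl | hx
      · exact Or.inl rfl
      · exact Or.inr (support_wtake_subset q n x hx)

lemma isPath_wtake : ∀ {u v : V} (W : G.Walk u v) (n : ℕ), W.IsPath → (wtake W n).IsPath
  | _, _, .nil, n, h => h
  | _, _, .cons h q, 0, hp => Walk.IsPath.nil
  | _, _, .cons h q, n + 1, hp => by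
      rw [Walk.cons_isPath_iff] at hp
      exact (Walk.cons_isPath_iff _ _).mpr
        ⟨isPath_wtake q n hp.1, fun hm => hp.2 (support_wtake_subset q n _ hm)⟩

lemma length_wtake {u v : V} (W : G.Walk u v) (n : ℕ) (hn : n ≤ W.length) :
    (wtake W n).length = n := by
  rw [← Walk.length_edges, edges_wtake, List.length_take, W.length_edges]
  omega

lemma getVert_ne_start {u v : V} (W : G.Walk u v) (hW : W.IsPath) (j : ℕ)
    (h1 : 1 ≤ j) (h2 : j ≤ W.length) : W.getVert j ≠ u := by
  intro h
  have hp2 : ((wtake W j).copy rfl h).IsPath := by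
    rw [Walk.isPath_copy]
    exact isPath_wtake W j hW
  have hnil := Walk.isPath_iff_eq_nil.mp hp2
  have hlen : ((wtake W j).copy rfl h).length = j := by
    rw [Walk.length_copy, length_wtake W j h2]
  rw [hnil] at hlen
  simp at hlen
  omega

lemma edges_getElem : ∀ {u v : V} (W : G.Walk u v) (i : ℕ) (h : i < W.edges.length),
    W.edges[i] = s(W.getVert i, W.getVert (i + 1))
  | _, _, .nil, i, h => by simp [Walk.edges_nil] at h
  | _, _, .cons hadj q, 0, h => by
      simp [Walk.edges_cons, Walk.getVert_zero, Walk.getVert_cons_succ]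
  | _, _, .cons hadj q, i + 1, h => by
      simp only [Walk.edges_cons, List.getElem_cons_succ, Walk.getVert_cons_succ]
      exact edges_getElem q i (by simpa using h)

end Walks

lemma mg_take_succ {Δ : ℕ} : ∀ (L : List ℤ) (j : ℕ) (b : ℤ) (h : j < L.length),
    mg Δ b (L.take (j + 1)) =
      mg Δ b (L.take j) + resDelta Δ (L[j]'h) ((b :: L)[j]'(by simp; omega))
  | [], j, b, h => by simp at h
  | x :: L', 0, b, h => by
      simp [mg]
  | x :: L', j + 1, b, h => by
      simp only [List.take_succ_cons, List.getElem_cons_succ]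
      rw [mg, mg, mg_take_succ L' j x (by simpa using h)]
      ring

lemma mdur_take_succ {Δ : ℕ} (L : List ℤ) (i : ℕ) (h1 : 1 ≤ i) (h2 : i < L.length) :
    mdur Δ (L.take (i + 1)) =
      mdur Δ (L.take i) + resDelta Δ (L[i]'h2) (L[i - 1]'(by omega)) := by
  obtain ⟨x, L', rfl⟩ : ∃ x L', L = x :: L' := by
    cases L with
    | nil => simp at h2
    | cons x L' => exact ⟨x, L', rfl⟩
  obtain ⟨j, rfl⟩ : ∃ j, i = j + 1 := ⟨i - 1, by omega⟩
  simp only [List.take_succ_cons, List.getElem_cons_succ, Nat.add_sub_cancel]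
  rw [mdur, mdur, mg_take_succ L' j x (by simpa using h2)]
  ring

lemma fastest_eq_mdur {V : Type*} {G : SimpleGraph V} (hG : G.IsTree) {Δ : ℕ} (hΔ : 1 ≤ Δ)
    (lab : Sym2 V → ℤ) (D : V → V → ℤ)
    (hreal : ∀ u v : V, u ≠ v → IsFastest G Δ lab u v (D u v))
    {x y : V} (W : G.Walk x y) (hW : W.IsPath) (hxy : x ≠ y) :
    D x y = mdur Δ (W.edges.map lab) := by
  obtain ⟨⟨W₀, ts₀, hp₀, hne₀, ⟨hf₀, hc₀⟩, hd₀⟩, hmin⟩ := hreal x y hxy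
  have hW0 : W₀ = W := by
    obtain ⟨p, -, hu⟩ := hG.existsUnique_path x y
    rw [hu W₀ hp₀, hu W hW]
  subst hW0
  have hlen : W₀.length ≠ 0 := fun h => hxy (Walk.eq_of_length_eq_zero h)
  obtain ⟨a, l, hE⟩ : ∃ a l, W₀.edges.map lab = a :: l := by
    cases h : W₀.edges.map lab with
    | nil =>
        exfalso
        apply hlen
        rw [← W₀.length_edges]
        simpa using congrArg List.length h
    | cons a l => exact ⟨a, l, rfl⟩
  have hub : D x y ≤ mdur Δ (W₀.edges.map lab) := by
    apply hmin
    refine ⟨W₀, gtimes Δ 0 (W₀.edges.map lab), hW, ?_, greedy_valid G Δ hΔ lab W₀, ?_⟩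
    · rw [hE, gtimes]; simp
    · rw [hE]; exact gtimes_duration hΔ a l
  have hcong : List.Forall₂ (fun a' s' => s' ≡ a' [ZMOD (Δ:ℤ)]) (W₀.edges.map lab) ts₀ := by
    rw [List.forall₂_map_left_iff]
    exact hf₀.imp fun e t h => h.2.2
  rw [hE] at hcong
  obtain ⟨s, ts, hcs, hcongtl, rfl⟩ := List.forall₂_cons_left_iff.mp hcong
  have hchain : List.Chain (· < ·) s ts := hc₀
  have hlb := lower_bound hΔ l ts a s hcongtl hchain hcs
  have hmdur : mdur Δ (a :: l) ≤ duration (s :: ts) := by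
    unfold duration
    simp only [List.head!]
    rw [mdur]
    linarith
  rw [hE] at hub ⊢
  rw [hd₀] at hmdur
  omega


/-- If `D` is realized by a Δ-periodic temporal graph whose underlying graph is a tree, then
for every pair `u ≠ v`, the unique static path from `u` to `v` carries a temporal path of
duration exactly `D u v` (so it underlies a fastest temporal path), and the travel delays at
all internal vertices of this path are determined by `D` via
`τ_{v_i}^{v_{i-1} v_{i+1}} = D u v_{i+1} − D u v_i`. -/
theorem stmt4 {V : Type*} (G : SimpleGraph V) (hG : G.IsTree) (Δ : ℕ) (hΔ : 1 ≤ Δ)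
    (lab : Sym2 V → ℤ) (hval : ValidLab G Δ lab) (D : V → V → ℤ)
    (hreal : ∀ u v : V, u ≠ v → IsFastest G Δ lab u v (D u v)) :
    ∀ (u v : V) (P : G.Walk u v), u ≠ v → P.IsPath →
      ((∃ times : List ℤ, IsTemporalWalk G Δ lab P times ∧ duration times = D u v) ∧
        ∀ i, 1 ≤ i → i + 1 ≤ P.length →
          resDelta Δ (lab s(P.getVert i, P.getVert (i + 1)))
              (lab s(P.getVert (i - 1), P.getVert i)) =
            D u (P.getVert (i + 1)) - D u (P.getVert i)) := by
  intro u v P hne hP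
  have hDW := fastest_eq_mdur hG hΔ lab D hreal P hP hne
  constructor
  · refine ⟨gtimes Δ 0 (P.edges.map lab), greedy_valid G Δ hΔ lab P, ?_⟩
    obtain ⟨a, l, hE⟩ : ∃ a l, P.edges.map lab = a :: l := by
      cases h : P.edges.map lab with
      | nil =>
          exfalso
          apply hne
          apply Walk.eq_of_length_eq_zero
          rw [← P.length_edges]
          simpa using congrArg List.length h
      | cons a l => exact ⟨a, l, rfl⟩
    rw [hE, gtimes_duration hΔ a l, hDW, hE]
  · intro i hi1 hi2
    have hDj : ∀ j, 1 ≤ j → j ≤ P.length →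
        D u (P.getVert j) = mdur Δ ((P.edges.map lab).take j) := by
      intro j hj1 hj2
      have hne' : u ≠ P.getVert j := (getVert_ne_start P hP j hj1 hj2).symm
      have h := fastest_eq_mdur hG hΔ lab D hreal (wtake P j) (isPath_wtake P j hP) hne'
      rw [h, edges_wtake, List.map_take]
    have hlen : i < (P.edges.map lab).length := by
      rw [List.length_map, P.length_edges]; omega
    rw [hDj (i + 1) (by omega) hi2, hDj i hi1 (by omega),
      mdur_take_succ (P.edges.map lab) i hi1 hlen]
    have hEi : i < P.edges.length := by rw [P.length_edges]; omega
    have hEi' : i - 1 < P.edges.length := by omega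
    have hLi : (P.edges.map lab)[i]'hlen = lab s(P.getVert i, P.getVert (i + 1)) := by
      rw [List.getElem_map, edges_getElem P i hEi]
    have hLi' : (P.edges.map lab)[i - 1]'(by rw [List.length_map]; exact hEi') =
        lab s(P.getVert (i - 1), P.getVert i) := by
      rw [List.getElem_map, edges_getElem P (i - 1) hEi']
      have h11 : i - 1 + 1 = i := by omega
      rw [h11]
    rw [hLi, hLi']
    ring
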